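/- arXiv:2102.08846 — 4 statements merged into one kernel-verified Lean document; each statement's English description precedes it below -/
import Mathlib

section
/- Let γ ∈ (0,2) and let l, j be real numbers with 0 ≤ j ≤ l. Then ∫₀¹ y^{1−γ} exp(−l√(y²+1)) I₀(jy) dy ≤ (2−γ)^{−1} exp(−√(l² − j²)). -/
noncomputable section
open Real MeasureTheory

/-- The modified Bessel function of index zero, `I₀(z) = (1/π)∫₀^π exp(z cos φ) dφ`. -/
def I0 (z : ℝ) : ℝ := (1 / π) * ∫ φ in (0:ℝ)..π, Real.exp (z * Real.cos φ)

lemma I0_continuous : Continuous I0 := by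
  unfold I0
  apply continuous_const.mul
  exact intervalIntegral.continuous_parametric_intervalIntegral_of_continuous'
    (by fun_prop : Continuous (Function.uncurry fun z φ => Real.exp (z * Real.cos φ))) 0 π

lemma I0_le_exp {z : ℝ} (hz : 0 ≤ z) : I0 z ≤ Real.exp z := by
  unfold I0
  have h1 : (∫ φ in (0:ℝ)..π, Real.exp (z * Real.cos φ)) ≤ ∫ φ in (0:ℝ)..π, Real.exp z := by
    apply intervalIntegral.integral_mono_on pi_pos.le
    · exact (Continuous.intervalIntegrable (by fun_prop) _ _)
    · exact intervalIntegrable_const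
    · intro x _
      exact Real.exp_le_exp.mpr (by nlinarith [Real.cos_le_one x, Real.neg_one_le_cos x])
  have h2 : (∫ _ in (0:ℝ)..π, Real.exp z) = π * Real.exp z := by simp
  rw [h2] at h1
  calc (1 / π) * ∫ φ in (0:ℝ)..π, Real.exp (z * Real.cos φ)
      ≤ (1 / π) * (π * Real.exp z) := by
        apply mul_le_mul_of_nonneg_left h1 (by positivity)
    _ = Real.exp z := by field_simp

/-- Estimate (2.13): `∫₀¹ y^{1−γ} e^{−l√(y²+1)} I0(jy) dy ≤ (2−γ)⁻¹ e^{−√(l²−j²)}`. -/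
theorem Kbar_gamma_bound (γ l j : ℝ) (hγ : γ ∈ Set.Ioo (0:ℝ) 2) (hj : 0 ≤ j) (hjl : j ≤ l) :
    ∫ y in (0:ℝ)..1, y ^ (1 - γ) * Real.exp (-l * Real.sqrt (y ^ 2 + 1)) * I0 (j * y)
      ≤ (2 - γ)⁻¹ * Real.exp (-Real.sqrt (l ^ 2 - j ^ 2)) := by
  obtain ⟨hγ0, hγ2⟩ := hγ
  have hl : 0 ≤ l := hj.trans hjl
  set s := Real.sqrt (l ^ 2 - j ^ 2) with hs
  have hs0 : 0 ≤ s := Real.sqrt_nonneg _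
  have hssq : s ^ 2 = l ^ 2 - j ^ 2 := Real.sq_sqrt (by nlinarith)
  -- key pointwise bound
  have key : ∀ y ∈ Set.Icc (0:ℝ) 1,
      y ^ (1 - γ) * Real.exp (-l * Real.sqrt (y ^ 2 + 1)) * I0 (j * y)
        ≤ y ^ (1 - γ) * Real.exp (-s) := by
    intro y hy
    have hy0 : 0 ≤ y := hy.1
    have hjy : 0 ≤ j * y := mul_nonneg hj hy0
    have hsq : 0 ≤ Real.sqrt (y ^ 2 + 1) := Real.sqrt_nonneg _
    have hsqsq : (Real.sqrt (y ^ 2 + 1)) ^ 2 = y ^ 2 + 1 := Real.sq_sqrt (by positivity)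
    have hkey : j * y + s ≤ l * Real.sqrt (y ^ 2 + 1) := by
      have h2 : (j * y + s) ^ 2 ≤ (l * Real.sqrt (y ^ 2 + 1)) ^ 2 := by
        rw [mul_pow, hsqsq]; nlinarith [sq_nonneg (j - s * y)]
      have h3 := Real.sqrt_le_sqrt h2
      rwa [Real.sqrt_sq (add_nonneg hjy hs0), Real.sqrt_sq (mul_nonneg hl hsq)] at h3
    have h1 : Real.exp (-l * Real.sqrt (y ^ 2 + 1)) * I0 (j * y) ≤ Real.exp (-s) := by
      calc Real.exp (-l * Real.sqrt (y ^ 2 + 1)) * I0 (j * y)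
          ≤ Real.exp (-l * Real.sqrt (y ^ 2 + 1)) * Real.exp (j * y) :=
            mul_le_mul_of_nonneg_left (I0_le_exp hjy) (Real.exp_nonneg _)
        _ = Real.exp (j * y - l * Real.sqrt (y ^ 2 + 1)) := by rw [← Real.exp_add]; ring_nf
        _ ≤ Real.exp (-s) := Real.exp_le_exp.mpr (by linarith)
    rw [mul_assoc]
    exact mul_le_mul_of_nonneg_left h1 (Real.rpow_nonneg hy0 _)
  have hint1 : IntervalIntegrable (fun y : ℝ => y ^ (1 - γ)) volume 0 1 :=
    intervalIntegral.intervalIntegrable_rpow' (by linarith)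
  have hintL : IntervalIntegrable
      (fun y : ℝ => y ^ (1 - γ) * Real.exp (-l * Real.sqrt (y ^ 2 + 1)) * I0 (j * y))
      volume 0 1 := by
    have := hint1.mul_continuousOn (g := fun y =>
        Real.exp (-l * Real.sqrt (y ^ 2 + 1)) * I0 (j * y))
      (Continuous.continuousOn ((by fun_prop : Continuous fun y : ℝ =>
        Real.exp (-l * Real.sqrt (y ^ 2 + 1))).mul
        (I0_continuous.comp (continuous_const.mul continuous_id))))
    simpa [mul_assoc] using this
  have hintR : IntervalIntegrable (fun y : ℝ => y ^ (1 - γ) * Real.exp (-s)) volume 0 1 :=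
    hint1.mul_const _
  have hmono := intervalIntegral.integral_mono_on (by norm_num : (0:ℝ) ≤ 1) hintL hintR key
  have heq : (∫ y in (0:ℝ)..1, y ^ (1 - γ) * Real.exp (-s))
      = (2 - γ)⁻¹ * Real.exp (-s) := by
    rw [intervalIntegral.integral_mul_const, integral_rpow (Or.inl (by linarith))]
    have h2γ : 1 - γ + 1 = 2 - γ := by ring
    rw [h2γ, Real.one_rpow, Real.zero_rpow (by linarith)]
    ring
  linarith [hmono, heq.le, heq.ge]

end
end

section
/- Let l, j be real numbers with 0 ≤ j < l. Then ∫₀^∞ (y/√(1+y²)) exp(−l√(y²+1)) I₀(jy) dy = exp(−√(l² − j²))/√(l² − j²). -/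
noncomputable section
open Real MeasureTheory Set Filter

namespace J2aux

/-! ### Square-root preliminaries -/

def S (u b : ℝ) : ℝ := Real.sqrt (1 + u^2 + b^2)

lemma S_pos (u b : ℝ) : 0 < S u b := Real.sqrt_pos.2 (by positivity)

lemma one_le_S (u b : ℝ) : 1 ≤ S u b := by
  have h := Real.sqrt_le_sqrt (show (1:ℝ) ≤ 1 + u^2 + b^2 by nlinarith [sq_nonneg u, sq_nonneg b])
  rwa [Real.sqrt_one] at h

lemma sq_S (u b : ℝ) : (S u b)^2 = 1 + u^2 + b^2 := Real.sq_sqrt (by positivity)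

lemma abs_le_S (u b : ℝ) : |u| ≤ S u b := by
  rw [S, ← Real.sqrt_sq_eq_abs]
  exact Real.sqrt_le_sqrt (by nlinarith [sq_nonneg b])

lemma add_abs_le_S (u b : ℝ) : (|u| + |b|) / 2 ≤ S u b := by
  nlinarith [sq_S u b, S_pos u b, abs_nonneg u, abs_nonneg b, sq_abs u, sq_abs b,
    sq_nonneg (|u| - |b|), sq_nonneg (2 * S u b - |u| - |b|)]

lemma sqrt_norm_le_S (u b : ℝ) : Real.sqrt (u^2 + b^2) ≤ S u b :=
  Real.sqrt_le_sqrt (by nlinarith)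

lemma one_le_sqrt_one_add_sq (r : ℝ) : 1 ≤ Real.sqrt (1 + r^2) := by
  have h := Real.sqrt_le_sqrt (show (1:ℝ) ≤ 1 + r^2 by nlinarith [sq_nonneg r])
  rwa [Real.sqrt_one] at h

lemma self_le_sqrt_one_add_sq (r : ℝ) : r ≤ Real.sqrt (1 + r^2) := by
  refine le_trans (le_abs_self r) ?_
  rw [← Real.sqrt_sq_eq_abs]
  exact Real.sqrt_le_sqrt (by nlinarith)

lemma polar_sq (r θ : ℝ) : 1 + (r * Real.cos θ)^2 + (r * Real.sin θ)^2 = 1 + r^2 := by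
  have h := Real.sin_sq_add_cos_sq θ
  nlinarith

/-! ### The boost map -/

def ψ (p q b u : ℝ) : ℝ := p * u - q * S u b

section boost

variable {p q : ℝ} (hpq : p^2 - q^2 = 1) (hq : 0 ≤ q) (hqp : q < p)
include hpq hq hqp

omit hpq in
lemma T_pos (u b : ℝ) : 0 < p * S u b - q * u := by
  have h1 := abs_le_S u b
  have h2 := le_abs_self u
  have h3 := S_pos u b
  nlinarith

lemma key_sqrt (u b : ℝ) : S (ψ p q b u) b = p * S u b - q * u := by
  have hs := sq_S u b
  have h1 : 1 + (ψ p q b u)^2 + b^2 = (p * S u b - q * u)^2 := by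
    rw [ψ]
    linear_combination (-(1:ℝ)) * hs - ((S u b)^2 - u^2) * hpq
  rw [S, h1, Real.sqrt_sq (T_pos hq hqp u b).le]

end boost

lemma hasDerivAt_S (u b : ℝ) : HasDerivAt (fun u => S u b) (u / S u b) u := by
  have h1 : HasDerivAt (fun u : ℝ => 1 + u^2 + b^2) (2 * u) u := by
    simpa using (((hasDerivAt_pow 2 u).const_add 1).add_const (b^2))
  have h2 := h1.sqrt (by positivity)
  convert h2 using 1
  all_goals simp only [S]
  field_simp [Real.sqrt_pos.2 (show (0:ℝ) < 1 + u^2 + b^2 by positivity) |>.ne'] <;> ring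

lemma hasDerivAt_ψ (p q b u : ℝ) :
    HasDerivAt (fun u => ψ p q b u) (p - q * (u / S u b)) u := by
  have h := ((hasDerivAt_id u).const_mul p).sub ((hasDerivAt_S u b).const_mul q); simp only [mul_one] at h; exact h

section boost2
variable {p q : ℝ} (hq : 0 ≤ q) (hqp : q < p)
include hq hqp

lemma ψ_deriv_pos (b u : ℝ) : 0 < p - q * (u / S u b) := by
  have h0 := S_pos u b
  have h : p - q * (u / S u b) = (p * S u b - q * u) / S u b := by field_simp <;> ring
  rw [h]
  exact div_pos (T_pos hq hqp u b) h0

lemma ψ_strictMono (b : ℝ) : StrictMono (fun u => ψ p q b u) := by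
  apply strictMono_of_deriv_pos
  intro x
  rw [(hasDerivAt_ψ p q b x).deriv]
  exact ψ_deriv_pos hq hqp b x

lemma ψ_surjective (b : ℝ) : Function.Surjective (fun u => ψ p q b u) := by
  have hc : Continuous (fun u => ψ p q b u) := by
    unfold ψ S; fun_prop
  apply hc.surjective
  · apply tendsto_atTop_mono' _ _ (tendsto_atTop_add_const_right atTop (-(q * (1 + |b|)))
      ((tendsto_id.const_mul_atTop (show (0:ℝ) < p - q by linarith))))
    filter_upwards [eventually_ge_atTop (0:ℝ)] with u hu
    have hS : S u b ≤ 1 + |b| + u := by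
      rw [S]
      have h2 : (1:ℝ) + u^2 + b^2 ≤ (1 + |b| + u)^2 := by
        nlinarith [abs_nonneg b, sq_abs b]
      calc Real.sqrt (1 + u^2 + b^2) ≤ Real.sqrt ((1 + |b| + u)^2) := Real.sqrt_le_sqrt h2
        _ = 1 + |b| + u := Real.sqrt_sq (by positivity)
    simp only [id_eq, ψ]
    nlinarith
  · apply tendsto_atBot_mono' _ _ (tendsto_id.const_mul_atBot (show (0:ℝ) < p + q by linarith))
    filter_upwards [eventually_le_atBot (0:ℝ)] with u hu
    have h1 : -u ≤ S u b := le_trans (neg_le_abs u) (abs_le_S u b)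
    simp only [id_eq, ψ]
    nlinarith

end boost2

/-! ### The main integrand on `ℝ²` -/

/-- `fF l j x = exp(-(l√(1+|x|²) - j x₁)) / √(1+|x|²)` -/
def fF (l j : ℝ) (x : ℝ × ℝ) : ℝ := Real.exp (-(l * S x.1 x.2 - j * x.1)) / S x.1 x.2

lemma continuous_S2 : Continuous (fun x : ℝ × ℝ => S x.1 x.2) := by
  unfold S; fun_prop

lemma continuous_fF (l j : ℝ) : Continuous (fF l j) := by
  apply Continuous.div _ continuous_S2 (fun x => (S_pos x.1 x.2).ne')
  apply Real.continuous_exp.comp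
  exact ((continuous_const.mul continuous_S2).sub (continuous_const.mul continuous_fst)).neg

lemma fF_pos (l j : ℝ) (x : ℝ × ℝ) : 0 < fF l j x :=
  div_pos (Real.exp_pos _) (S_pos x.1 x.2)

lemma fF_le {l j : ℝ} (hj : 0 ≤ j) (hjl : j < l) (x : ℝ × ℝ) :
    ‖fF l j x‖ ≤ Real.exp (-((l - j) * S x.1 x.2)) := by
  rw [Real.norm_eq_abs, abs_of_pos (fF_pos l j x)]
  calc fF l j x ≤ Real.exp (-(l * S x.1 x.2 - j * x.1)) :=
        div_le_self (Real.exp_pos _).le (one_le_S x.1 x.2)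
    _ ≤ Real.exp (-((l - j) * S x.1 x.2)) := by
        apply Real.exp_le_exp.2
        have h1 := abs_le_S x.1 x.2
        have h2 := le_abs_self x.1
        nlinarith

lemma fF_le' {l j : ℝ} (hj : 0 ≤ j) (hjl : j < l) (x : ℝ × ℝ) :
    ‖fF l j x‖ ≤ Real.exp (-((l - j) * Real.sqrt (x.1^2 + x.2^2))) := by
  refine le_trans (fF_le hj hjl x) (Real.exp_le_exp.2 ?_)
  have h := sqrt_norm_le_S x.1 x.2
  nlinarith

/-! ### Integrability on `ℝ²` -/

lemma integrable_exp_neg_abs {c : ℝ} (hc : 0 < c) :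
    Integrable (fun t : ℝ => Real.exp (-(c * |t|))) := by
  have hcont : Continuous (fun t : ℝ => Real.exp (-(c * |t|))) := by fun_prop
  have hIoi : IntegrableOn (fun t : ℝ => Real.exp (-(c * |t|))) (Ioi 0) := by
    apply (exp_neg_integrableOn_Ioi 0 hc).congr_fun _ measurableSet_Ioi
    intro t ht
    simp only []
    rw [abs_of_pos ht, neg_mul]
  apply hcont.locallyIntegrable.integrable_of_isBigO_atTop_of_norm_isNegInvariant
    (Eventually.of_forall fun t => by simp [abs_neg]) (Asymptotics.isBigO_refl _ _)
  exact ⟨Ioi 0, Ioi_mem_atTop 0, hIoi⟩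

lemma integrable_prod_bound {c : ℝ} (hc : 0 < c) :
    Integrable (fun x : ℝ × ℝ => Real.exp (-(c * |x.1|)) * Real.exp (-(c * |x.2|))) := by
  have h := (integrable_exp_neg_abs hc).mul_prod (integrable_exp_neg_abs hc)
  rwa [← Measure.volume_eq_prod] at h

lemma integrable_of_le_exp_S {c : ℝ} (hc : 0 < c) {F : ℝ × ℝ → ℝ}
    (hFc : Continuous F)
    (hle : ∀ x : ℝ × ℝ, ‖F x‖ ≤ Real.exp (-(c * S x.1 x.2))) :
    Integrable F := by
  apply Integrable.mono' (g := fun x : ℝ × ℝ =>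
      Real.exp (-(c/2 * |x.1|)) * Real.exp (-(c/2 * |x.2|)))
    (integrable_prod_bound (by positivity)) hFc.aestronglyMeasurable
  apply Eventually.of_forall
  intro x
  refine le_trans (hle x) ?_
  rw [← Real.exp_add]
  apply Real.exp_le_exp.2
  have h := add_abs_le_S x.1 x.2
  nlinarith

lemma integrable_fF {l j : ℝ} (hj : 0 ≤ j) (hjl : j < l) : Integrable (fF l j) :=
  integrable_of_le_exp_S (show (0:ℝ) < l - j by linarith) (continuous_fF l j)
    (fun x => by simpa [neg_mul] using fF_le hj hjl x)

/-! ### Integrability on the polar target -/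

lemma integrableOn_mul_exp {c : ℝ} (hc : 0 < c) :
    IntegrableOn (fun r : ℝ => r * Real.exp (-(c * r))) (Ioi 0) := by
  apply Integrable.mono' (g := fun r : ℝ => (2/c) * Real.exp (-(c/2) * r))
    (((exp_neg_integrableOn_Ioi 0 (by positivity))).const_mul (2/c))
    ((continuous_id.mul (by fun_prop :
      Continuous fun r : ℝ => Real.exp (-(c*r)))).aestronglyMeasurable)
  rw [ae_restrict_iff' measurableSet_Ioi]
  apply Eventually.of_forall
  intro r hr
  simp only [Pi.mul_apply, id_eq]
  rw [Real.norm_eq_abs, abs_of_nonneg (mul_nonneg (le_of_lt hr) (Real.exp_pos _).le)]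
  have h1 : r ≤ (2/c) * Real.exp (c/2 * r) := by
    have h2 := Real.add_one_le_exp (c/2 * r)
    rw [← sub_nonneg,
      show 2/c * Real.exp (c/2*r) - r = (2/c) * (Real.exp (c/2*r) - (c/2*r)) by field_simp]
    have h3 : 0 ≤ Real.exp (c/2*r) - (c/2*r) := by linarith
    positivity
  calc r * Real.exp (-(c * r)) ≤ ((2/c) * Real.exp (c/2 * r)) * Real.exp (-(c * r)) := by
        apply mul_le_mul_of_nonneg_right h1 (Real.exp_pos _).le
    _ = (2/c) * Real.exp (-(c/2) * r) := by
        rw [mul_assoc, ← Real.exp_add]; ring_nf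

lemma continuous_polar_symm : Continuous (fun p : ℝ × ℝ => polarCoord.symm p) := by
  have h : (fun p : ℝ × ℝ => polarCoord.symm p)
      = fun p : ℝ × ℝ => (p.1 * Real.cos p.2, p.1 * Real.sin p.2) := by
    funext p; rw [polarCoord_symm_apply]
  rw [h]; fun_prop

lemma integrableOn_polar_target {c : ℝ} (hc : 0 < c) {F : ℝ × ℝ → ℝ} (hFc : Continuous F)
    (hle : ∀ x : ℝ × ℝ, ‖F x‖ ≤ Real.exp (-(c * Real.sqrt (x.1^2 + x.2^2)))) :
    IntegrableOn (fun p : ℝ × ℝ => p.1 • F (polarCoord.symm p))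
      (Ioi (0:ℝ) ×ˢ Ioo (-π) π) := by
  apply Integrable.mono' (g := fun p : ℝ × ℝ => (p.1 * Real.exp (-(c * p.1))) * (1:ℝ))
  · show Integrable _ ((volume : Measure (ℝ × ℝ)).restrict _)
    have hmeq : (volume : Measure (ℝ × ℝ)).restrict (Ioi (0:ℝ) ×ˢ Ioo (-π) π)
        = (volume.restrict (Ioi 0)).prod (volume.restrict (Ioo (-π) π)) := by
      rw [Measure.volume_eq_prod, Measure.prod_restrict]
    rw [hmeq]
    exact (integrableOn_mul_exp hc).mul_prod
      (integrableOn_const measure_Ioo_lt_top.ne)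
  · exact (continuous_fst.smul (hFc.comp continuous_polar_symm)).aestronglyMeasurable
  · rw [ae_restrict_iff' (measurableSet_Ioi.prod measurableSet_Ioo)]
    apply Eventually.of_forall
    rintro ⟨r, θ⟩ ⟨hr, -⟩
    simp only [smul_eq_mul, norm_mul, Real.norm_eq_abs, mul_one]
    have h1 : ‖F (polarCoord.symm (r, θ))‖ ≤ Real.exp (-(c * r)) := by
      refine le_trans (hle _) ?_
      apply Real.exp_le_exp.2
      simp only [polarCoord_symm_apply]
      rw [show (r * Real.cos θ)^2 + (r * Real.sin θ)^2 = r^2 by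
        nlinarith [Real.sin_sq_add_cos_sq θ], Real.sqrt_sq (le_of_lt hr)]
    calc |r| * |F (polarCoord.symm (r, θ))| ≤ |r| * Real.exp (-(c * r)) :=
          mul_le_mul_of_nonneg_left (by rwa [Real.norm_eq_abs] at h1) (abs_nonneg r)
      _ = r * Real.exp (-(c * r)) := by rw [abs_of_pos hr]

/-! ### The radial integral -/

lemma integral_one_Ioo : ∫ _ in Ioo (-π) π, (1:ℝ) = 2 * π := by
  simp only [integral_const, MeasurableSet.univ, Measure.restrict_apply, univ_inter,
    Real.volume_Ioo, smul_eq_mul, mul_one]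
  simp only [Measure.real, Measure.restrict_apply MeasurableSet.univ, univ_inter, Real.volume_Ioo]
  rw [ENNReal.toReal_ofReal (by linarith [Real.pi_pos])]
  ring

lemma radial_integral {m : ℝ} (hm : 0 < m) :
    ∫ r in Ioi (0:ℝ), r * (Real.exp (-(m * Real.sqrt (1 + r^2))) / Real.sqrt (1 + r^2))
      = Real.exp (-m) / m := by
  have hsq : ∀ r : ℝ, (0:ℝ) < 1 + r^2 := fun r => by positivity
  have hD : ∀ r : ℝ, HasDerivAt (fun t : ℝ => -(1/m) * Real.exp (-(m * Real.sqrt (1 + t^2))))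
      (r * (Real.exp (-(m * Real.sqrt (1 + r^2))) / Real.sqrt (1 + r^2))) r := by
    intro r
    have h1 : HasDerivAt (fun t : ℝ => 1 + t^2) (2*r) r := by
      simpa using ((hasDerivAt_pow 2 r).const_add 1)
    have h2 := h1.sqrt (hsq r).ne'
    have h3 := (((h2.const_mul m).neg).exp).const_mul (-(1/m))
    convert h3 using 1
    have hs0 : Real.sqrt (1 + r^2) ≠ 0 := (Real.sqrt_pos.2 (hsq r)).ne'
    case e'_9 => simp only [Pi.neg_apply]; field_simp
    all_goals rfl
  have hInt : IntegrableOn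
      (fun r : ℝ => r * (Real.exp (-(m * Real.sqrt (1 + r^2))) / Real.sqrt (1 + r^2)))
      (Ioi 0) := by
    apply Integrable.mono' (integrableOn_mul_exp hm)
    · apply Continuous.aestronglyMeasurable
      fun_prop (disch := intro x; exact (Real.sqrt_pos.2 (hsq x)).ne')
    · rw [ae_restrict_iff' measurableSet_Ioi]
      apply Eventually.of_forall
      intro r hr
      have h1 : (1:ℝ) ≤ Real.sqrt (1 + r^2) := one_le_sqrt_one_add_sq r
      have h2 : r ≤ Real.sqrt (1 + r^2) := self_le_sqrt_one_add_sq r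
      have hr' : (0:ℝ) < r := hr
      rw [Real.norm_eq_abs, abs_of_nonneg (mul_nonneg hr'.le
        (div_nonneg (Real.exp_pos _).le (Real.sqrt_nonneg _)))]
      have h3 : Real.exp (-(m * Real.sqrt (1 + r^2))) ≤ Real.exp (-(m * r)) := by
        apply Real.exp_le_exp.2
        simp only [neg_le_neg_iff]
        exact mul_le_mul_of_nonneg_left h2 hm.le
      calc r * (Real.exp (-(m * Real.sqrt (1 + r^2))) / Real.sqrt (1 + r^2))
          ≤ r * (Real.exp (-(m * Real.sqrt (1 + r^2))) / 1) := by
            apply mul_le_mul_of_nonneg_left _ (le_of_lt hr')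
            exact div_le_div_of_nonneg_left (Real.exp_pos _).le one_pos h1
        _ = r * Real.exp (-(m * Real.sqrt (1 + r^2))) := by rw [div_one]
        _ ≤ r * Real.exp (-(m * r)) := mul_le_mul_of_nonneg_left h3 (le_of_lt hr')
  have hTend : Tendsto (fun t : ℝ => -(1/m) * Real.exp (-(m * Real.sqrt (1 + t^2))))
      atTop (nhds 0) := by
    have h1 : Tendsto (fun t : ℝ => Real.sqrt (1 + t^2)) atTop atTop :=
      tendsto_atTop_mono self_le_sqrt_one_add_sq tendsto_id
    have h2 : Tendsto (fun t : ℝ => -(m * Real.sqrt (1 + t^2))) atTop atBot :=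
      tendsto_neg_atTop_atBot.comp (h1.const_mul_atTop hm)
    have h4 := (Real.tendsto_exp_atBot.comp h2).const_mul (-(1/m))
    simpa using h4
  have hfin := integral_Ioi_of_hasDerivAt_of_tendsto' (fun r _ => hD r) hInt hTend
  rw [hfin]
  norm_num
  rw [inv_mul_eq_div]

/-! ### The change-of-variables step -/

section main

variable {m p q : ℝ} (hm : 0 < m) (hpq : p^2 - q^2 = 1) (hq : 0 ≤ q) (hqp : q < p)
include hm hpq hq hqp

lemma key_pointwise (u b : ℝ) :
    |p - q * (u / S u b)| • fF m 0 (ψ p q b u, b) = fF (m*p) (m*q) (u, b) := by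
  have hT := T_pos hq hqp u b
  have hS0 := S_pos u b
  have hkey := key_sqrt hpq hq hqp u b
  simp only [fF, smul_eq_mul]
  rw [hkey]
  rw [show p - q * (u / S u b) = (p * S u b - q * u) / S u b by field_simp <;> ring,
    abs_of_pos (div_pos hT hS0)]
  rw [zero_mul, sub_zero, show m*p*S u b - m*q*u = m*(p*S u b - q*u) by ring]
  field_simp

lemma inner_subst (b : ℝ) :
    ∫ u : ℝ, fF m 0 (u, b) = ∫ u : ℝ, fF (m*p) (m*q) (u, b) := by
  have himg : (fun u => ψ p q b u) '' univ = univ := by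
    rw [image_univ]
    exact (ψ_surjective hq hqp b).range_eq
  calc ∫ u : ℝ, fF m 0 (u, b) = ∫ u in univ, fF m 0 (u, b) := setIntegral_univ.symm
    _ = ∫ u in (fun u => ψ p q b u) '' univ, fF m 0 (u, b) := by rw [himg]
    _ = ∫ u in univ, |p - q * (u / S u b)| • fF m 0 (ψ p q b u, b) :=
        integral_image_eq_integral_abs_deriv_smul MeasurableSet.univ
          (fun x _ => (hasDerivAt_ψ p q b x).hasDerivWithinAt)
          ((ψ_strictMono hq hqp b).injective.injOn) _
    _ = ∫ u in univ, fF (m*p) (m*q) (u, b) := by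
        apply setIntegral_congr_fun MeasurableSet.univ
        intro u _
        exact key_pointwise hm hpq hq hqp u b
    _ = ∫ u : ℝ, fF (m*p) (m*q) (u, b) := setIntegral_univ

lemma global_subst :
    ∫ x : ℝ × ℝ, fF (m*p) (m*q) x = ∫ x : ℝ × ℝ, fF m 0 x := by
  have hq0 : (0:ℝ) ≤ m*q := by positivity
  have hql : m*q < m*p := by nlinarith
  have hm0 : (0:ℝ) < m := hm
  have hint1 : Integrable (fF (m*p) (m*q)) := integrable_fF hq0 hql
  have hint2 : Integrable (fF m 0) := integrable_fF le_rfl hm0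
  have hprod : (volume : Measure (ℝ × ℝ)) = (volume.prod volume) := Measure.volume_eq_prod ℝ ℝ
  rw [hprod] at hint1 hint2 ⊢
  rw [integral_prod_symm _ hint1, integral_prod_symm _ hint2]
  congr 1
  funext b
  exact (inner_subst hm hpq hq hqp b).symm

end main

lemma fF_sym (l j a b : ℝ) : fF l j (a, -b) = fF l j (a, b) := by
  simp only [fF, S, neg_sq]

lemma reflect_integral {F : ℝ × ℝ → ℝ} (hFc : Continuous F)
    (hsym : ∀ a b : ℝ, F (a, -b) = F (a, b)) (r : ℝ) :
    ∫ θ in Ioo (-π) π, r * F (r * Real.cos θ, r * Real.sin θ)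
      = 2 * ∫ θ in (0:ℝ)..π, r * F (r * Real.cos θ, r * Real.sin θ) := by
  set k : ℝ → ℝ := fun θ => r * F (r * Real.cos θ, r * Real.sin θ) with hk
  have hkc : Continuous k := by
    apply continuous_const.mul
    exact hFc.comp ((continuous_const.mul Real.continuous_cos).prodMk
      (continuous_const.mul Real.continuous_sin))
  have heven : ∀ θ, k (-θ) = k θ := by
    intro θ
    simp only [hk]
    rw [Real.cos_neg, Real.sin_neg, mul_neg, hsym]
  have h1 : ∫ θ in Ioo (-π) π, k θ = ∫ θ in (-π)..π, k θ := by
    rw [intervalIntegral.integral_of_le (by linarith [Real.pi_pos]),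
      integral_Ioc_eq_integral_Ioo]
  rw [h1, ← intervalIntegral.integral_add_adjacent_intervals (a := -π) (b := 0) (c := π)
    (hkc.intervalIntegrable _ _) (hkc.intervalIntegrable _ _)]
  have h2 : ∫ θ in (-π)..(0:ℝ), k θ = ∫ θ in (0:ℝ)..π, k θ := by
    have h3 := intervalIntegral.integral_comp_neg (a := (0:ℝ)) (b := π) k
    rw [neg_zero] at h3
    rw [← h3]
    apply intervalIntegral.integral_congr
    intro θ _
    exact heven θ
  rw [h2]
  ring

lemma gauss_out {m : ℝ} (hm : 0 < m) :
    ∫ x : ℝ × ℝ, fF m 0 x = (Real.exp (-m) / m) * (2 * π) := by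
  rw [← integral_comp_polarCoord_symm (fF m 0), polarCoord_target]
  have hprod : (volume : Measure (ℝ × ℝ)) = (volume.prod volume) := Measure.volume_eq_prod ℝ ℝ
  calc ∫ p in Ioi (0:ℝ) ×ˢ Ioo (-π) π, p.1 • fF m 0 (polarCoord.symm p)
      = ∫ p in Ioi (0:ℝ) ×ˢ Ioo (-π) π,
          (fun r : ℝ => r * (Real.exp (-(m * Real.sqrt (1 + r^2))) / Real.sqrt (1 + r^2))) p.1
            * (fun _ : ℝ => (1:ℝ)) p.2 := by
        apply setIntegral_congr_fun (measurableSet_Ioi.prod measurableSet_Ioo)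
        rintro ⟨r, θ⟩ -
        simp only [polarCoord_symm_apply, smul_eq_mul, fF, S, mul_one]
        rw [polar_sq r θ, zero_mul, sub_zero]
    _ = (∫ r in Ioi (0:ℝ), r * (Real.exp (-(m * Real.sqrt (1 + r^2))) / Real.sqrt (1 + r^2)))
          * ∫ _ in Ioo (-π) π, (1:ℝ) := by
        rw [hprod]
        exact setIntegral_prod_mul (fun r : ℝ => r * (Real.exp (-(m * Real.sqrt (1 + r^2))) / Real.sqrt (1 + r^2))) (fun _ : ℝ => (1:ℝ)) (Ioi 0) (Ioo (-π) π)
    _ = (Real.exp (-m) / m) * (2 * π) := by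
        rw [radial_integral hm, integral_one_Ioo]

end J2aux

open J2aux in
/-- The exact formula (2.14) for `J₂(l,j)`. -/
theorem J2_formula (l j : ℝ) (hj : 0 ≤ j) (hjl : j < l) :
    ∫ y in Set.Ioi (0:ℝ),
        (y / Real.sqrt (1 + y ^ 2)) * Real.exp (-l * Real.sqrt (y ^ 2 + 1)) * I0 (j * y)
      = Real.exp (-Real.sqrt (l ^ 2 - j ^ 2)) / Real.sqrt (l ^ 2 - j ^ 2) := by
  have hl : 0 < l := lt_of_le_of_lt hj hjl
  set m := Real.sqrt (l^2 - j^2) with hmdef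
  have hlj2 : (0:ℝ) < l^2 - j^2 := by nlinarith
  have hm : 0 < m := Real.sqrt_pos.2 hlj2
  have hm2 : m^2 = l^2 - j^2 := Real.sq_sqrt hlj2.le
  set p := l/m with hpdef
  set q := j/m with hqdef
  have hq : 0 ≤ q := div_nonneg hj hm.le
  have hqp : q < p := by
    rw [hpdef, hqdef, div_lt_div_iff_of_pos_right hm]
    exact hjl
  have hpq : p^2 - q^2 = 1 := by
    rw [hpdef, hqdef]
    field_simp
    nlinarith [hm2]
  have hl_eq : m * p = l := by rw [hpdef]; field_simp
  have hj_eq : m * q = j := by rw [hqdef]; field_simp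
  -- Step A : unfold I0 and express the integrand via fF
  have hA : ∀ y : ℝ, (y / Real.sqrt (1 + y^2)) * Real.exp (-l * Real.sqrt (y^2+1)) * I0 (j*y)
      = (1/π) * ∫ θ in (0:ℝ)..π, y * fF l j (y * Real.cos θ, y * Real.sin θ) := by
    intro y
    rw [I0, show (y / Real.sqrt (1+y^2)) * Real.exp (-l * Real.sqrt (y^2+1))
        * ((1/π) * ∫ φ in (0:ℝ)..π, Real.exp (j*y*Real.cos φ))
      = (1/π) * ((y / Real.sqrt (1+y^2)) * Real.exp (-l * Real.sqrt (y^2+1))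
        * (∫ φ in (0:ℝ)..π, Real.exp (j*y*Real.cos φ))) by ring]
    congr 1
    rw [← intervalIntegral.integral_const_mul]
    apply intervalIntegral.integral_congr
    intro θ _
    simp only [fF, S]
    rw [polar_sq y θ]
    rw [show y^2 + 1 = 1 + y^2 by ring, mul_assoc, ← Real.exp_add]
    rw [show -l * Real.sqrt (1+y^2) + j*y*Real.cos θ
      = -(l * Real.sqrt (1+y^2) - j * (y * Real.cos θ)) by ring]
    ring
  rw [setIntegral_congr_fun measurableSet_Ioi (fun y _ => hA y), integral_const_mul]
  -- Step B : polar coordinates for fF l j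
  have hfIoi : ∫ x : ℝ × ℝ, fF l j x
      = 2 * ∫ y in Set.Ioi (0:ℝ), ∫ θ in (0:ℝ)..π, y * fF l j (y * Real.cos θ, y * Real.sin θ) := by
    rw [← integral_comp_polarCoord_symm (fF l j), polarCoord_target]
    have hprod : (volume : Measure (ℝ × ℝ)) = (volume.prod volume) := Measure.volume_eq_prod ℝ ℝ
    have hint : IntegrableOn (fun p : ℝ × ℝ => p.1 • fF l j (polarCoord.symm p))
        (Ioi (0:ℝ) ×ˢ Ioo (-π) π) (volume.prod volume) := by
      rw [← hprod]
      exact integrableOn_polar_target (show (0:ℝ) < l - j by linarith)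
        (continuous_fF l j) (fF_le' hj hjl)
    rw [hprod, setIntegral_prod _ hint, ← integral_const_mul]
    apply setIntegral_congr_fun measurableSet_Ioi
    intro r _
    calc (∫ θ in Ioo (-π) π, (r, θ).1 • fF l j (polarCoord.symm (r, θ)))
        = ∫ θ in Ioo (-π) π, r * fF l j (r * Real.cos θ, r * Real.sin θ) := by
          apply setIntegral_congr_fun measurableSet_Ioo
          intro θ _
          simp only [polarCoord_symm_apply, smul_eq_mul]
      _ = 2 * ∫ θ in (0:ℝ)..π, r * fF l j (r * Real.cos θ, r * Real.sin θ) :=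
          reflect_integral (continuous_fF l j) (fF_sym l j) r
  -- Step C + D : change of variables and the Gaussian-style polar evaluation
  have hval : ∫ x : ℝ × ℝ, fF l j x = (Real.exp (-m) / m) * (2 * π) := by
    rw [show fF l j = fF (m*p) (m*q) by rw [hl_eq, hj_eq]]
    rw [global_subst hm hpq hq hqp]
    exact gauss_out hm
  rw [hval] at hfIoi
  have hπ : (π:ℝ) ≠ 0 := Real.pi_ne_zero
  have h2 : ∫ y in Set.Ioi (0:ℝ), ∫ θ in (0:ℝ)..π, y * fF l j (y * Real.cos θ, y * Real.sin θ)
      = Real.exp (-m) / m * π := by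
    have := hfIoi
    linarith [hfIoi]
  rw [h2]
  field_simp

end
end

section
/- Let l, j be real numbers with 0 ≤ j < l, and write w = √(l² − j²). Then ∫₀^∞ y(y²+1)^{1/2} exp(−l√(y²+1)) I₀(jy) dy = w^{−5} e^{−w} ((w² + 3w + 3)l² − w² − w³). -/
noncomputable section
open Real MeasureTheory

namespace K2Aux
open Real MeasureTheory Set Filter Topology

def U (p : ℝ × ℝ) : ℝ := Real.sqrt (1 + p.1 ^ 2 + p.2 ^ 2)

lemma U_sq (p : ℝ × ℝ) : U p ^ 2 = 1 + p.1 ^ 2 + p.2 ^ 2 := by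
  rw [U, Real.sq_sqrt]; positivity

lemma one_le_U (p : ℝ × ℝ) : 1 ≤ U p := by
  have h : Real.sqrt 1 ≤ U p :=
    Real.sqrt_le_sqrt (by nlinarith [sq_nonneg p.1, sq_nonneg p.2])
  simpa using h

lemma U_pos (p : ℝ × ℝ) : 0 < U p := lt_of_lt_of_le one_pos (one_le_U p)

lemma abs_fst_le_U (p : ℝ × ℝ) : |p.1| ≤ U p := by
  rw [← Real.sqrt_sq_eq_abs, U]
  exact Real.sqrt_le_sqrt (by nlinarith [sq_nonneg p.2])

lemma abs_snd_le_U (p : ℝ × ℝ) : |p.2| ≤ U p := by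
  rw [← Real.sqrt_sq_eq_abs, U]
  exact Real.sqrt_le_sqrt (by nlinarith [sq_nonneg p.1])

lemma U_cont : Continuous U := by
  apply Real.continuous_sqrt.comp
  continuity

lemma intOn_pow_exp (n : ℕ) {a : ℝ} (ha : 0 < a) :
    IntegrableOn (fun x : ℝ => x ^ n * Real.exp (-a * x)) (Ioi 0) := by
  have := integrableOn_rpow_mul_exp_neg_mul_rpow (p := 1) (s := (n : ℝ)) (b := a)
    (lt_of_lt_of_le neg_one_lt_zero (Nat.cast_nonneg n)) one_pos ha
  refine this.congr_fun (fun x hx => ?_) measurableSet_Ioi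
  beta_reduce
  rw [Real.rpow_natCast, Real.rpow_one]

lemma int_one_add_abs {a : ℝ} (ha : 0 < a) :
    Integrable (fun x : ℝ => (1 + |x|) * Real.exp (-a * |x|)) := by
  have hIoi : IntegrableOn (fun x : ℝ => (1 + |x|) * Real.exp (-a * |x|)) (Ioi 0) := by
    have h0 := intOn_pow_exp 0 ha
    have h1 := intOn_pow_exp 1 ha
    have : IntegrableOn (fun x : ℝ => x ^ 0 * Real.exp (-a * x) + x ^ 1 * Real.exp (-a * x))
        (Ioi 0) := h0.add h1
    refine this.congr_fun (fun x hx => ?_) measurableSet_Ioi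
    have hx' : (0:ℝ) < x := hx
    rw [abs_of_pos hx']; ring
  have hIio : IntegrableOn (fun x : ℝ => (1 + |x|) * Real.exp (-a * |x|)) (Iio 0) := by
    have himg : (fun x : ℝ => -x) '' (Ioi 0) = Iio 0 := by
      ext x
      constructor
      · rintro ⟨y, hy, rfl⟩
        simpa using (show (0:ℝ) < y from hy)
      · intro hx
        exact ⟨-x, by simpa using (show x < 0 from hx), by ring⟩
    have := (MeasureTheory.integrableOn_image_iff_integrableOn_abs_deriv_smul
      (s := Ioi (0:ℝ)) (f := fun x : ℝ => -x) (f' := fun _ => (-1 : ℝ)) measurableSet_Ioi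
      (fun x _ => (hasDerivAt_neg x).hasDerivWithinAt)
      (fun x _ y _ h => by simpa using h)
      (fun x : ℝ => (1 + |x|) * Real.exp (-a * |x|))).mpr ?_
    · rwa [himg] at this
    · refine hIoi.congr_fun (fun x hx => ?_) measurableSet_Ioi
      simp [abs_neg]
  have : Iio (0:ℝ) ∪ Ici 0 = univ := Iio_union_Ici
  rw [← integrableOn_univ, ← this]
  refine hIio.union ?_
  rwa [integrableOn_Ici_iff_integrableOn_Ioi]

lemma int_base {κ : ℝ} (hκ : 0 < κ) :
    Integrable (fun p : ℝ × ℝ => U p * Real.exp (-κ * U p)) := by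
  have h2 : 0 < κ / 2 := by linarith
  have hprod : Integrable (fun p : ℝ × ℝ =>
      ((1 + |p.1|) * Real.exp (-(κ/2) * |p.1|)) * ((1 + |p.2|) * Real.exp (-(κ/2) * |p.2|))) := by
    rw [Measure.volume_eq_prod]
    exact (int_one_add_abs h2).mul_prod (int_one_add_abs h2)
  refine hprod.mono' ((U_cont.mul (Real.continuous_exp.comp (continuous_const.mul U_cont))).aestronglyMeasurable)
    (Filter.Eventually.of_forall (fun p => ?_))
  have h1 := one_le_U p; have hf := abs_fst_le_U p; have hsnd := abs_snd_le_U p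
  have hU0 : 0 < U p := U_pos p
  have hUle : U p ≤ (1 + |p.1|) * (1 + |p.2|) := by
    have : U p ≤ 1 + |p.1| + |p.2| := by
      rw [U, show (1 : ℝ) + |p.1| + |p.2| = Real.sqrt ((1 + |p.1| + |p.2|)^2) by
        rw [Real.sqrt_sq (by positivity)]]
      apply Real.sqrt_le_sqrt
      have := abs_nonneg p.1; have := abs_nonneg p.2
      nlinarith [sq_abs p.1, sq_abs p.2]
    nlinarith [abs_nonneg p.1, abs_nonneg p.2]
  have hexp : Real.exp (-κ * U p) ≤ Real.exp (-(κ/2) * |p.1|) * Real.exp (-(κ/2) * |p.2|) := by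
    rw [← Real.exp_add]
    apply Real.exp_le_exp.mpr
    have : |p.1| + |p.2| ≤ 2 * U p := by
      have : |p.1| ≤ U p := hf; linarith
    nlinarith
  rw [Real.norm_eq_abs, abs_of_nonneg (by positivity)]
  calc U p * Real.exp (-κ * U p)
      ≤ ((1 + |p.1|) * (1 + |p.2|)) * (Real.exp (-(κ/2) * |p.1|) * Real.exp (-(κ/2) * |p.2|)) := by
        apply mul_le_mul hUle hexp (by positivity) (by positivity)
    _ = ((1 + |p.1|) * Real.exp (-(κ/2) * |p.1|)) * ((1 + |p.2|) * Real.exp (-(κ/2) * |p.2|)) := by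
        ring

lemma tendsto_pow_exp {w : ℝ} (hw : 0 < w) (n : ℕ) :
    Tendsto (fun t : ℝ => t ^ n * Real.exp (-(w * t))) atTop (𝓝 0) := by
  have h1 := tendsto_pow_mul_exp_neg_atTop_nhds_zero n
  have h2 : Tendsto (fun t : ℝ => w * t) atTop atTop :=
    Tendsto.const_mul_atTop hw tendsto_id
  have h3 := (h1.comp h2).const_mul ((w : ℝ) ^ n)⁻¹
  rw [mul_zero] at h3
  refine h3.congr (fun t => ?_)
  simp only [Function.comp]
  field_simp
  ring

lemma stepD {w c s : ℝ} (hw : 0 < w) :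
    ∫ r in Ioi (0:ℝ),
        r / Real.sqrt (1 + r ^ 2) * Real.exp (-(w * Real.sqrt (1 + r ^ 2))) *
          (c ^ 2 * (1 + r ^ 2) + s ^ 2 * r ^ 2 / 2)
      = Real.exp (-w) *
          ((c^2 + s^2/2)/w + 2*(c^2 + s^2/2)/w^2 + (2*(c^2 + s^2/2)/w^3 - s^2/(2*w))) := by
  set A : ℝ := c^2 + s^2/2 with hA
  set aa : ℝ := A / w with haa
  set bb : ℝ := 2 * A / w^2 with hbb
  set dd : ℝ := 2 * A / w^3 - s^2/(2*w) with hdd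
  set v : ℝ → ℝ := fun r => Real.sqrt (1 + r ^ 2) with hv
  have hv_pos : ∀ r : ℝ, 0 < v r := fun r => Real.sqrt_pos.mpr (by positivity)
  have hv_sq : ∀ r : ℝ, v r ^ 2 = 1 + r ^ 2 := fun r => Real.sq_sqrt (by positivity)
  have hv_ge : ∀ r : ℝ, 0 ≤ r → r ≤ v r := by
    intro r hr
    calc r = Real.sqrt (r ^ 2) := (Real.sqrt_sq hr).symm
      _ ≤ v r := Real.sqrt_le_sqrt (by nlinarith)
  have hv_le : ∀ r : ℝ, 0 ≤ r → v r ≤ 1 + r := by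
    intro r hr
    rw [hv, show (1:ℝ) + r = Real.sqrt ((1+r)^2) by rw [Real.sqrt_sq (by positivity)]]
    exact Real.sqrt_le_sqrt (by nlinarith)
  set F : ℝ → ℝ := fun r => -(Real.exp (-(w * v r)) * (aa * (1 + r^2) + bb * v r + dd)) with hF
  set Ψ : ℝ → ℝ := fun r =>
    r / v r * Real.exp (-(w * v r)) * (c ^ 2 * (1 + r ^ 2) + s ^ 2 * r ^ 2 / 2) with hΨ
  have hderiv : ∀ r ∈ Ici (0:ℝ), HasDerivAt F (Ψ r) r := by
    intro r _
    have hvr : HasDerivAt v (r / v r) r := by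
      have h1 : HasDerivAt (fun r : ℝ => 1 + r ^ 2) (2 * r) r := by
        simpa using ((hasDerivAt_pow 2 r).const_add 1)
      have := (Real.hasDerivAt_sqrt (by positivity : (1:ℝ) + r^2 ≠ 0)).comp r h1
      refine this.congr_deriv ?_
      field_simp [hv]
      simp only [hv]
      field_simp
    have hg : HasDerivAt (fun r => -(w * v r)) (-(w * (r / v r))) r := (hvr.const_mul w).neg
    have he : HasDerivAt (fun r => Real.exp (-(w * v r)))
        (Real.exp (-(w * v r)) * (-(w * (r / v r)))) r := hg.exp
    have hP : HasDerivAt (fun r => aa * (1 + r^2) + bb * v r + dd)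
        (aa * (2 * r) + bb * (r / v r)) r := by
      have h1 : HasDerivAt (fun r : ℝ => aa * (1 + r ^ 2)) (aa * (2 * r)) r := by
        simpa using (((hasDerivAt_pow 2 r).const_add 1).const_mul aa)
      exact (h1.add (hvr.const_mul bb)).add_const dd
    have := (he.mul hP).neg
    refine this.congr_deriv ?_
    have h0 : v r ≠ 0 := (hv_pos r).ne'
    rw [hΨ, haa, hbb, hdd, hA]
    have hsq := hv_sq r
    field_simp
    ring_nf
  have hvc : Continuous v := Real.continuous_sqrt.comp (continuous_const.add (continuous_pow 2))
  have hΨcont : Continuous Ψ := by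
    refine Continuous.mul (Continuous.mul ?_ ?_) ?_
    · exact continuous_id.div hvc (fun r => (hv_pos r).ne')
    · exact Real.continuous_exp.comp (continuous_const.mul hvc).neg
    · exact (continuous_const.mul (continuous_const.add (continuous_pow 2))).add
        ((continuous_const.mul (continuous_pow 2)).div_const 2)
  have hΨint : IntegrableOn Ψ (Ioi (0:ℝ)) := by
    have hg : IntegrableOn (fun r : ℝ => (c^2+s^2) * ((1+r)^2 * Real.exp (-w * r))) (Ioi 0) := by
      have h012 : IntegrableOn (fun r : ℝ =>
          r ^ 0 * Real.exp (-w * r) + 2 * (r ^ 1 * Real.exp (-w * r)) + r ^ 2 * Real.exp (-w * r))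
          (Ioi 0) := ((intOn_pow_exp 0 hw).add ((intOn_pow_exp 1 hw).const_mul 2)).add
            (intOn_pow_exp 2 hw)
      have h013 : IntegrableOn (fun x : ℝ => (c^2+s^2) *
          (x ^ 0 * Real.exp (-w * x) + 2 * (x ^ 1 * Real.exp (-w * x)) + x ^ 2 * Real.exp (-w * x)))
          (Ioi 0) := h012.const_mul (c^2+s^2)
      refine h013.congr_fun (fun x hx => ?_) measurableSet_Ioi
      ring
    refine hg.integrable.mono' (hΨcont.aestronglyMeasurable.restrict) ?_
    rw [ae_restrict_iff' measurableSet_Ioi]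
    refine Eventually.of_forall (fun r hr => ?_)
    have hr0 : (0:ℝ) < r := hr
    have h1 : r / v r ≤ 1 := (div_le_one (hv_pos r)).mpr (hv_ge r hr0.le)
    have h2 : Real.exp (-(w * v r)) ≤ Real.exp (-w * r) := by
      apply Real.exp_le_exp.mpr
      have := hv_ge r hr0.le
      nlinarith
    have h3 : c ^ 2 * (1 + r ^ 2) + s ^ 2 * r ^ 2 / 2 ≤ (c^2+s^2) * (1+r)^2 := by
      nlinarith [sq_nonneg c, sq_nonneg s, sq_nonneg r, sq_nonneg (1+r)]
    have hΨnn : 0 ≤ Ψ r := by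
      apply mul_nonneg (mul_nonneg (by positivity) (Real.exp_pos _).le)
      positivity
    rw [Real.norm_eq_abs, abs_of_nonneg hΨnn]
    calc Ψ r ≤ 1 * Real.exp (-w * r) * ((c^2+s^2) * (1+r)^2) := by
          apply mul_le_mul _ h3 (by positivity) (by positivity)
          apply mul_le_mul h1 h2 (Real.exp_pos _).le zero_le_one
      _ = (c^2+s^2) * ((1+r)^2 * Real.exp (-w * r)) := by ring
  have hFtend : Tendsto F atTop (𝓝 (0:ℝ)) := by
    have hvtend : Tendsto v atTop atTop :=
      tendsto_atTop_mono' _ ((eventually_ge_atTop (0:ℝ)).mono (fun r hr => hv_ge r hr)) tendsto_id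
    have hG : Tendsto (fun t : ℝ => -(Real.exp (-(w * t)) * (aa * t^2 + bb * t + dd)))
        atTop (𝓝 (0:ℝ)) := by
      have h2 := (tendsto_pow_exp hw 2).const_mul aa
      have h1 := (tendsto_pow_exp hw 1).const_mul bb
      have h0 := (tendsto_pow_exp hw 0).const_mul dd
      rw [mul_zero] at h2 h1 h0
      have := ((h2.add h1).add h0).neg
      rw [add_zero, add_zero, neg_zero] at this
      refine this.congr (fun t => ?_)
      ring
    refine (hG.comp hvtend).congr (fun r => ?_)
    simp only [Function.comp]
    rw [hv_sq r]
  have key := integral_Ioi_of_hasDerivAt_of_tendsto'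
    (f := F) (f' := Ψ) (a := 0) hderiv hΨint hFtend
  rw [key]
  have hv0 : v 0 = 1 := by
    simp [hv]
  rw [hF]
  simp only [hv0]
  norm_num

lemma boost_sq {c s vb x b : ℝ} (hc : c ^ 2 = s ^ 2 + 1) (hvb : vb ^ 2 = 1 + x ^ 2 + b ^ 2) :
    (c * vb - s * x) ^ 2 = 1 + (c * x - s * vb) ^ 2 + b ^ 2 := by nlinarith [hc, hvb]

lemma boost_pos {c s vb x : ℝ} (hs : 0 ≤ s) (hcs : s < c) (hvb : 0 < vb) (hx : |x| ≤ vb) :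
    0 < c * vb - s * x := by
  rcases abs_le.mp hx with ⟨h1, h2⟩
  nlinarith

lemma stepB {w c s : ℝ} (hw : 0 < w) (hs : 0 ≤ s) (hcpos : 0 < c) (hc : c ^ 2 = s ^ 2 + 1) :
    ∫ p : ℝ × ℝ, U p * Real.exp (-(w * c * U p) + w * s * p.1)
      = ∫ q : ℝ × ℝ, (c * U q + s * q.1) ^ 2 / U q * Real.exp (-(w * U q)) := by
  have hcs : s < c := by nlinarith
  -- integrability of f
  have hfint : Integrable (fun p : ℝ × ℝ => U p * Real.exp (-(w * c * U p) + w * s * p.1)) := by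
    have hκ : 0 < w * (c - s) := by nlinarith
    refine (int_base hκ).mono' ?_ (Filter.Eventually.of_forall (fun p => ?_))
    · exact (U_cont.mul (Real.continuous_exp.comp (by
        exact ((continuous_const.mul U_cont).neg.add
          (continuous_const.mul continuous_fst))))).aestronglyMeasurable
    · have h1 := one_le_U p; have hf := abs_fst_le_U p; have hU0 := U_pos p
      rw [Real.norm_eq_abs, abs_of_nonneg (by positivity)]
      have hp1 : p.1 ≤ U p := le_trans (le_abs_self p.1) hf
      have hmul : w * s * p.1 ≤ w * s * U p :=
        mul_le_mul_of_nonneg_left hp1 (by positivity)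
      have hE : -(w * c * U p) + w * s * p.1 ≤ -(w * (c - s)) * U p := by nlinarith
      exact mul_le_mul_of_nonneg_left (Real.exp_le_exp.mpr hE) hU0.le
  -- integrability of h
  have hhint : Integrable (fun q : ℝ × ℝ => (c * U q + s * q.1) ^ 2 / U q *
      Real.exp (-(w * U q))) := by
    have := ((int_base hw).const_mul ((c + s) ^ 2))
    refine this.mono' ?_ (Filter.Eventually.of_forall (fun q => ?_))
    · apply Continuous.aestronglyMeasurable
      refine Continuous.mul (Continuous.div ?_ U_cont (fun q => (U_pos q).ne')) ?_
      · exact ((continuous_const.mul U_cont).add (continuous_const.mul continuous_fst)).pow 2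
      · exact Real.continuous_exp.comp (continuous_const.mul U_cont).neg
    · have h1 := one_le_U q; have hf := abs_fst_le_U q; have hU0 := U_pos q
      rw [Real.norm_eq_abs, abs_of_nonneg (by positivity)]
      have hb : (c * U q + s * q.1) ^ 2 ≤ ((c + s) * U q) ^ 2 := by
        have h2 : |c * U q + s * q.1| ≤ (c + s) * U q := by
          rw [abs_le]
          rcases abs_le.mp hf with ⟨ha1, ha2⟩
          constructor <;> nlinarith
        nlinarith [abs_nonneg (c * U q + s * q.1), sq_abs (c * U q + s * q.1)]
      rw [show -w * U q = -(w * U q) by ring]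
      have hU0' : U q ≠ 0 := hU0.ne'
      calc (c * U q + s * q.1) ^ 2 / U q * Real.exp (-(w * U q))
          ≤ ((c + s) * U q) ^ 2 / U q * Real.exp (-(w * U q)) := by
            apply mul_le_mul_of_nonneg_right _ (Real.exp_pos _).le
            gcongr
        _ = (c + s) ^ 2 * (U q * Real.exp (-(w * U q))) := by
            field_simp
  -- slice-wise change of variables
  have hslice : ∀ b : ℝ,
      (∫ x : ℝ, U (x, b) * Real.exp (-(w * c * U (x, b)) + w * s * x))
        = ∫ y : ℝ, (c * U (y, b) + s * y) ^ 2 / U (y, b) * Real.exp (-(w * U (y, b))) := by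
    intro b
    set vb : ℝ → ℝ := fun x => Real.sqrt (1 + x ^ 2 + b ^ 2) with hvbdef
    have hvbU : ∀ x, vb x = U (x, b) := fun x => rfl
    have hvb_pos : ∀ x, 0 < vb x := fun x => U_pos (x, b)
    have hvb_sq : ∀ x, vb x ^ 2 = 1 + x ^ 2 + b ^ 2 := fun x => U_sq (x, b)
    have hvb_abs : ∀ x, |x| ≤ vb x := fun x => abs_fst_le_U (x, b)
    set Φ : ℝ → ℝ := fun x => c * x - s * vb x with hΦdef
    have hΦd : ∀ x, HasDerivAt Φ (c - s * (x / vb x)) x := by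
      intro x
      have h1 : HasDerivAt (fun x : ℝ => 1 + x ^ 2 + b ^ 2) (2 * x) x := by
        simpa using (((hasDerivAt_pow 2 x).const_add 1).add_const (b ^ 2))
      have h2 : HasDerivAt vb (x / vb x) x := by
        have := (Real.hasDerivAt_sqrt (by positivity : (1:ℝ) + x ^ 2 + b ^ 2 ≠ 0)).comp x h1
        refine this.congr_deriv ?_
        rw [hvbdef]
        field_simp
      have := (hasDerivAt_id x |>.const_mul c).sub (h2.const_mul s)
      exact this.congr_deriv (by simp)
    have hΦpos : ∀ x, 0 < c - s * (x / vb x) := by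
      intro x
      have h := hvb_pos x
      have h2 := hvb_abs x
      rcases abs_le.mp h2 with ⟨ha1, ha2⟩
      rw [sub_pos, mul_div_assoc']
      rw [div_lt_iff₀ h]
      nlinarith
    have hmono : StrictMono Φ := by
      apply strictMono_of_deriv_pos
      intro x
      rw [(hΦd x).deriv]
      exact hΦpos x
    have hsurj : Function.Surjective Φ := by
      intro y
      set u' : ℝ := Real.sqrt (1 + y ^ 2 + b ^ 2) with hu'
      have hu'_pos : 0 < u' := U_pos (y, b)
      have hu'_sq : u' ^ 2 = 1 + y ^ 2 + b ^ 2 := U_sq (y, b)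
      have hu'_abs : |y| ≤ u' := abs_fst_le_U (y, b)
      refine ⟨c * y + s * u', ?_⟩
      have hx_sq : (c * u' + s * y) ^ 2 = 1 + (c * y + s * u') ^ 2 + b ^ 2 := by
        nlinarith [hc, hu'_sq]
      have hx_pos : 0 < c * u' + s * y := by
        rcases abs_le.mp hu'_abs with ⟨ha1, ha2⟩
        nlinarith
      have hvb_val : vb (c * y + s * u') = c * u' + s * y := by
        show Real.sqrt (1 + (c * y + s * u') ^ 2 + b ^ 2) = c * u' + s * y
        rw [← hx_sq, Real.sqrt_sq hx_pos.le]
      rw [hΦdef]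
      simp only
      rw [hvb_val]
      linear_combination y * hc
    have himg : Φ '' Set.univ = Set.univ := by
      rw [Set.image_univ, Set.range_eq_univ]
      exact hsurj
    have hkey := MeasureTheory.integral_image_eq_integral_abs_deriv_smul
      (s := Set.univ) (f := Φ) (f' := fun x => c - s * (x / vb x)) MeasurableSet.univ
      (fun x _ => (hΦd x).hasDerivWithinAt)
      (fun x _ y _ hxy => hmono.injective hxy)
      (fun y => (c * U (y, b) + s * y) ^ 2 / U (y, b) * Real.exp (-(w * U (y, b))))
    rw [himg, MeasureTheory.setIntegral_univ, MeasureTheory.setIntegral_univ] at hkey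
    rw [hkey]
    congr 1
    ext x
    -- pointwise identity
    have hvbx := hvb_pos x
    have hUval : U (Φ x, b) = c * vb x - s * x := by
      show Real.sqrt (1 + (Φ x) ^ 2 + b ^ 2) = c * vb x - s * x
      rw [hΦdef]
      simp only
      rw [← boost_sq hc (hvb_sq x), Real.sqrt_sq (boost_pos hs hcs hvbx (hvb_abs x)).le]
    have hcvb_pos : 0 < c * vb x - s * x := boost_pos hs hcs hvbx (hvb_abs x)
    rw [hUval]
    have hnum : c * (c * vb x - s * x) + s * Φ x = vb x := by
      rw [hΦdef]; simp only; linear_combination (vb x) * hc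
    rw [hnum]
    rw [smul_eq_mul, abs_of_pos (hΦpos x)]
    have hexp : -(w * (c * vb x - s * x)) = -(w * c * vb x) + w * s * x := by ring
    rw [hexp]
    rw [show U (x, b) = vb x from (hvbU x).symm]
    have hne1 : vb x ≠ 0 := hvbx.ne'
    have hne2 : c * vb x - s * x ≠ 0 := hcvb_pos.ne'
    have hne3 : vb x * c - s * x ≠ 0 := by rw [mul_comm]; exact hne2
    field_simp
  -- assemble by Fubini
  rw [Measure.volume_eq_prod] at hfint hhint ⊢
  rw [MeasureTheory.integral_prod_symm _ hfint, MeasureTheory.integral_prod_symm _ hhint]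
  exact integral_congr_ae (Filter.Eventually.of_forall (fun b => hslice b))

lemma cos_integral (z : ℝ) :
    ∫ θ in Ioo (-π) π, Real.exp (z * Real.cos θ) = 2 * (π * I0 z) := by
  have hπ : (0:ℝ) < π := Real.pi_pos
  have hI : π * I0 z = ∫ φ in (0:ℝ)..π, Real.exp (z * Real.cos φ) := by
    rw [I0]
    field_simp
  have hcont : Continuous (fun θ : ℝ => Real.exp (z * Real.cos θ)) :=
    Real.continuous_exp.comp (continuous_const.mul Real.continuous_cos)
  have h2 := intervalIntegral.integral_comp_neg (a := (0:ℝ)) (b := π)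
    (fun θ => Real.exp (z * Real.cos θ))
  simp only [Real.cos_neg, neg_zero] at h2
  have hadd := intervalIntegral.integral_add_adjacent_intervals
    (μ := volume) (a := -π) (b := 0) (c := π)
    (hcont.intervalIntegrable _ _) (hcont.intervalIntegrable _ _)
  rw [show (∫ θ in Ioo (-π) π, Real.exp (z * Real.cos θ))
      = ∫ θ in (-π)..π, Real.exp (z * Real.cos θ) by
    rw [intervalIntegral.integral_of_le (by linarith), integral_Ioc_eq_integral_Ioo]]
  rw [← hadd, ← h2, hI]
  ring

lemma stepA {l j : ℝ} (hj : 0 ≤ j) (hjl : j < l) :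
    ∫ p : ℝ × ℝ, U p * Real.exp (-(l * U p) + j * p.1)
      = (2 * π) * ∫ y in Ioi (0:ℝ),
          y * Real.sqrt (1 + y ^ 2) * Real.exp (-(l * Real.sqrt (1 + y ^ 2))) * I0 (j * y) := by
  have hπ : (0:ℝ) < π := Real.pi_pos
  rw [← integral_comp_polarCoord_symm (fun p => U p * Real.exp (-(l * U p) + j * p.1))]
  have htarget : polarCoord.target = Ioi (0:ℝ) ×ˢ Ioo (-π) π := rfl
  rw [htarget]
  have hUval : ∀ p : ℝ × ℝ, U (polarCoord.symm p) = Real.sqrt (1 + p.1 ^ 2) := by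
    intro p
    rw [polarCoord_symm_apply, U]
    congr 1
    simp only
    nlinarith [Real.sin_sq_add_cos_sq p.2]
  have hfst : ∀ p : ℝ × ℝ, (polarCoord.symm p).1 = p.1 * Real.cos p.2 := by
    intro p; rw [polarCoord_symm_apply]
  -- rewrite the integrand
  have hcongr : ∀ p : ℝ × ℝ,
      p.1 • ((fun p => U p * Real.exp (-(l * U p) + j * p.1)) (polarCoord.symm p))
        = (p.1 * Real.sqrt (1 + p.1 ^ 2) * Real.exp (-(l * Real.sqrt (1 + p.1 ^ 2))))
            * Real.exp (j * (p.1 * Real.cos p.2)) := by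
    intro p
    simp only [smul_eq_mul]
    rw [hUval p, hfst p, Real.exp_add]
    ring
  rw [show (fun p : ℝ × ℝ =>
      p.1 • ((fun p => U p * Real.exp (-(l * U p) + j * p.1)) (polarCoord.symm p)))
    = fun p : ℝ × ℝ => (p.1 * Real.sqrt (1 + p.1 ^ 2) *
        Real.exp (-(l * Real.sqrt (1 + p.1 ^ 2)))) * Real.exp (j * (p.1 * Real.cos p.2))
    from funext hcongr]
  -- Fubini
  have hint : IntegrableOn (fun p : ℝ × ℝ => (p.1 * Real.sqrt (1 + p.1 ^ 2) *
      Real.exp (-(l * Real.sqrt (1 + p.1 ^ 2)))) * Real.exp (j * (p.1 * Real.cos p.2)))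
      (Ioi (0:ℝ) ×ˢ Ioo (-π) π) := by
    have hl : 0 < l - j := by linarith
    have hg1 : IntegrableOn (fun r : ℝ => (r ^ 1 * Real.exp (-(l-j) * r))
        + r ^ 2 * Real.exp (-(l-j) * r)) (Ioi 0) :=
      (intOn_pow_exp 1 hl).add (intOn_pow_exp 2 hl)
    have hg2 : IntegrableOn (fun _ : ℝ => (1:ℝ)) (Ioo (-π) π) := by
      have : volume (Ioo (-π) π) < ⊤ := measure_Ioo_lt_top
      exact (integrableOn_const_iff).mpr (Or.inr this)
    have hprod : IntegrableOn (fun p : ℝ × ℝ =>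
        ((p.1 ^ 1 * Real.exp (-(l-j) * p.1)) + p.1 ^ 2 * Real.exp (-(l-j) * p.1)) * (1:ℝ))
        (Ioi (0:ℝ) ×ˢ Ioo (-π) π) := by
      rw [IntegrableOn, Measure.volume_eq_prod, ← Measure.prod_restrict]
      exact hg1.mul_prod hg2
    refine hprod.mono' ?_ ?_
    · apply Continuous.aestronglyMeasurable
      apply Continuous.mul
      · exact (continuous_fst.mul (Real.continuous_sqrt.comp
          (continuous_const.add (continuous_fst.pow 2)))).mul
          (Real.continuous_exp.comp (continuous_const.mul (Real.continuous_sqrt.comp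
            (continuous_const.add (continuous_fst.pow 2)))).neg)
      · exact Real.continuous_exp.comp (continuous_const.mul
          (continuous_fst.mul (Real.continuous_cos.comp continuous_snd)))
    · rw [ae_restrict_iff' (measurableSet_Ioi.prod measurableSet_Ioo)]
      refine Eventually.of_forall (fun p hp => ?_)
      obtain ⟨hp1, hp2⟩ := hp
      have hr : (0:ℝ) < p.1 := hp1
      set r := p.1
      have hsq : r ≤ Real.sqrt (1 + r ^ 2) := by
        calc r = Real.sqrt (r ^ 2) := (Real.sqrt_sq hr.le).symm
          _ ≤ _ := Real.sqrt_le_sqrt (by nlinarith)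
      have hsq2 : Real.sqrt (1 + r ^ 2) ≤ 1 + r := by
        rw [show (1:ℝ) + r = Real.sqrt ((1+r)^2) by rw [Real.sqrt_sq (by positivity)]]
        exact Real.sqrt_le_sqrt (by nlinarith)
      have hcos : Real.cos p.2 ≤ 1 := Real.cos_le_one p.2
      have hexp : -(l * Real.sqrt (1 + r ^ 2)) + j * (r * Real.cos p.2) ≤ -(l-j) * r := by
        have h1 : j * (r * Real.cos p.2) ≤ j * r := by
          have := mul_le_mul_of_nonneg_left hcos (mul_nonneg hj hr.le)
          nlinarith
        have h2' : l * r ≤ l * Real.sqrt (1 + r ^ 2) :=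
          mul_le_mul_of_nonneg_left hsq (by linarith)
        nlinarith
      rw [Real.norm_eq_abs, abs_of_nonneg (by positivity)]
      have hexp2 : Real.exp (-(l * Real.sqrt (1 + r ^ 2))) * Real.exp (j * (r * Real.cos p.2))
          ≤ Real.exp (-(l-j) * r) := by
        rw [← Real.exp_add]
        exact Real.exp_le_exp.mpr hexp
      calc r * Real.sqrt (1 + r ^ 2) * Real.exp (-(l * Real.sqrt (1 + r ^ 2)))
            * Real.exp (j * (r * Real.cos p.2))
          = (r * Real.sqrt (1 + r ^ 2)) * (Real.exp (-(l * Real.sqrt (1 + r ^ 2)))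
              * Real.exp (j * (r * Real.cos p.2))) := by ring
        _ ≤ (r * (1 + r)) * Real.exp (-(l-j) * r) := by
            apply mul_le_mul _ hexp2 (by positivity) (by positivity)
            nlinarith
        _ = (r ^ 1 * Real.exp (-(l-j) * r) + r ^ 2 * Real.exp (-(l-j) * r)) * 1 := by ring
  rw [Measure.volume_eq_prod] at hint ⊢
  rw [MeasureTheory.setIntegral_prod _ hint]
  -- inner integral
  have hinner : ∀ r ∈ Ioi (0:ℝ), (∫ θ in Ioo (-π) π,
      (r * Real.sqrt (1 + r ^ 2) * Real.exp (-(l * Real.sqrt (1 + r ^ 2))))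
        * Real.exp (j * (r * Real.cos θ)))
      = (2 * π) * (r * Real.sqrt (1 + r ^ 2) * Real.exp (-(l * Real.sqrt (1 + r ^ 2))) * I0 (j * r)) := by
    intro r _
    rw [MeasureTheory.integral_const_mul]
    have : ∀ θ : ℝ, Real.exp (j * (r * Real.cos θ)) = Real.exp ((j * r) * Real.cos θ) := by
      intro θ; ring_nf
    simp_rw [this]
    rw [cos_integral (j * r)]
    ring
  rw [MeasureTheory.setIntegral_congr_fun measurableSet_Ioi hinner]
  rw [MeasureTheory.integral_const_mul]

lemma stepC {w c s : ℝ} (hw : 0 < w) :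
    ∫ q : ℝ × ℝ, (c * U q + s * q.1) ^ 2 / U q * Real.exp (-(w * U q))
      = (2 * π) * ∫ r in Ioi (0:ℝ),
          r / Real.sqrt (1 + r ^ 2) * Real.exp (-(w * Real.sqrt (1 + r ^ 2))) *
            (c ^ 2 * (1 + r ^ 2) + s ^ 2 * r ^ 2 / 2) := by
  have hπ : (0:ℝ) < π := Real.pi_pos
  rw [← integral_comp_polarCoord_symm (fun q => (c * U q + s * q.1) ^ 2 / U q *
    Real.exp (-(w * U q)))]
  have htarget : polarCoord.target = Ioi (0:ℝ) ×ˢ Ioo (-π) π := rfl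
  rw [htarget]
  have hUval : ∀ p : ℝ × ℝ, U (polarCoord.symm p) = Real.sqrt (1 + p.1 ^ 2) := by
    intro p
    rw [polarCoord_symm_apply, U]
    congr 1
    simp only
    nlinarith [Real.sin_sq_add_cos_sq p.2]
  have hv_pos : ∀ r : ℝ, (0:ℝ) < Real.sqrt (1 + r ^ 2) :=
    fun r => Real.sqrt_pos.mpr (by positivity)
  have hv_sq : ∀ r : ℝ, Real.sqrt (1 + r ^ 2) ^ 2 = 1 + r ^ 2 :=
    fun r => Real.sq_sqrt (by positivity)
  -- rewrite integrand into A + B cos + D cos²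
  have hcongr : ∀ p : ℝ × ℝ,
      p.1 • ((fun q => (c * U q + s * q.1) ^ 2 / U q * Real.exp (-(w * U q))) (polarCoord.symm p))
        = (p.1 / Real.sqrt (1 + p.1 ^ 2) * Real.exp (-(w * Real.sqrt (1 + p.1 ^ 2)))
            * (c ^ 2 * (1 + p.1 ^ 2)))
          + (p.1 * Real.exp (-(w * Real.sqrt (1 + p.1 ^ 2))) * (2 * c * s * p.1)) * Real.cos p.2
          + (p.1 / Real.sqrt (1 + p.1 ^ 2) * Real.exp (-(w * Real.sqrt (1 + p.1 ^ 2)))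
            * (s ^ 2 * p.1 ^ 2)) * Real.cos p.2 ^ 2 := by
    intro p
    simp only [smul_eq_mul]
    rw [hUval p, polarCoord_symm_apply]
    simp only
    have h0 : Real.sqrt (1 + p.1 ^ 2) ≠ 0 := (hv_pos p.1).ne'
    have hsq := hv_sq p.1
    field_simp
    linear_combination p.1 * c ^ 2 * hsq
  rw [show (fun p : ℝ × ℝ =>
      p.1 • ((fun q => (c * U q + s * q.1) ^ 2 / U q * Real.exp (-(w * U q)))
        (polarCoord.symm p)))
    = fun p : ℝ × ℝ =>
        (p.1 / Real.sqrt (1 + p.1 ^ 2) * Real.exp (-(w * Real.sqrt (1 + p.1 ^ 2)))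
            * (c ^ 2 * (1 + p.1 ^ 2)))
          + (p.1 * Real.exp (-(w * Real.sqrt (1 + p.1 ^ 2))) * (2 * c * s * p.1)) * Real.cos p.2
          + (p.1 / Real.sqrt (1 + p.1 ^ 2) * Real.exp (-(w * Real.sqrt (1 + p.1 ^ 2)))
            * (s ^ 2 * p.1 ^ 2)) * Real.cos p.2 ^ 2
    from funext hcongr]
  have hint : IntegrableOn (fun p : ℝ × ℝ =>
      (p.1 / Real.sqrt (1 + p.1 ^ 2) * Real.exp (-(w * Real.sqrt (1 + p.1 ^ 2)))
          * (c ^ 2 * (1 + p.1 ^ 2)))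
        + (p.1 * Real.exp (-(w * Real.sqrt (1 + p.1 ^ 2))) * (2 * c * s * p.1)) * Real.cos p.2
        + (p.1 / Real.sqrt (1 + p.1 ^ 2) * Real.exp (-(w * Real.sqrt (1 + p.1 ^ 2)))
          * (s ^ 2 * p.1 ^ 2)) * Real.cos p.2 ^ 2)
      (Ioi (0:ℝ) ×ˢ Ioo (-π) π) := by
    have hg1 : IntegrableOn (fun r : ℝ => (c^2 + 2*|c*s| + s^2) *
        ((r ^ 0 * Real.exp (-w * r)) + r ^ 2 * Real.exp (-w * r))) (Ioi 0) :=
      ((intOn_pow_exp 0 hw).add (intOn_pow_exp 2 hw)).const_mul _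
    have hg2 : IntegrableOn (fun _ : ℝ => (1:ℝ)) (Ioo (-π) π) := by
      have : volume (Ioo (-π) π) < ⊤ := measure_Ioo_lt_top
      exact (integrableOn_const_iff).mpr (Or.inr this)
    have hprod : IntegrableOn (fun p : ℝ × ℝ =>
        ((c^2 + 2*|c*s| + s^2) * ((p.1 ^ 0 * Real.exp (-w * p.1)) + p.1 ^ 2 * Real.exp (-w * p.1)))
          * (1:ℝ)) (Ioi (0:ℝ) ×ˢ Ioo (-π) π) := by
      rw [IntegrableOn, Measure.volume_eq_prod, ← Measure.prod_restrict]
      exact hg1.mul_prod hg2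
    refine hprod.mono' ?_ ?_
    · apply Continuous.aestronglyMeasurable
      have hvc : Continuous (fun r : ℝ => Real.sqrt (1 + r ^ 2)) :=
        Real.continuous_sqrt.comp (continuous_const.add (continuous_pow 2))
      have hec : Continuous (fun p : ℝ × ℝ => Real.exp (-(w * Real.sqrt (1 + p.1 ^ 2)))) :=
        Real.continuous_exp.comp (continuous_const.mul (hvc.comp continuous_fst)).neg
      have hdc : Continuous (fun p : ℝ × ℝ => p.1 / Real.sqrt (1 + p.1 ^ 2)) :=
        continuous_fst.div (hvc.comp continuous_fst) (fun p => (hv_pos p.1).ne')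
      refine Continuous.add (Continuous.add ?_ ?_) ?_
      · exact (hdc.mul hec).mul (continuous_const.mul
          (continuous_const.add ((continuous_pow 2).comp continuous_fst)))
      · exact ((continuous_fst.mul hec).mul
          (continuous_const.mul continuous_fst)).mul
          (Real.continuous_cos.comp continuous_snd)
      · exact ((hdc.mul hec).mul (continuous_const.mul
          ((continuous_pow 2).comp continuous_fst))).mul
          ((Real.continuous_cos.comp continuous_snd).pow 2)
    · rw [ae_restrict_iff' (measurableSet_Ioi.prod measurableSet_Ioo)]
      refine Eventually.of_forall (fun p hp => ?_)
      obtain ⟨hp1, _⟩ := hp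
      have hr : (0:ℝ) < p.1 := hp1
      set r := p.1 with hrdef
      set v := Real.sqrt (1 + r ^ 2) with hvdef
      have hv0 : 0 < v := hv_pos r
      have hrv : r ≤ v := by
        calc r = Real.sqrt (r ^ 2) := (Real.sqrt_sq hr.le).symm
          _ ≤ v := Real.sqrt_le_sqrt (by nlinarith)
      have hdiv : r / v ≤ 1 := (div_le_one hv0).mpr hrv
      have hdiv0 : 0 ≤ r / v := by positivity
      have hexp : Real.exp (-(w * v)) ≤ Real.exp (-w * r) := by
        apply Real.exp_le_exp.mpr
        nlinarith
      have hexp0 : (0:ℝ) < Real.exp (-(w * v)) := Real.exp_pos _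
      have hcos1 : |Real.cos p.2| ≤ 1 := Real.abs_cos_le_one p.2
      have hcossq : Real.cos p.2 ^ 2 ≤ 1 := by
        nlinarith [sq_abs (Real.cos p.2), abs_nonneg (Real.cos p.2)]
      rw [Real.norm_eq_abs]
      have habs : |(r / v * Real.exp (-(w * v)) * (c ^ 2 * (1 + r ^ 2)))
          + (r * Real.exp (-(w * v)) * (2 * c * s * r)) * Real.cos p.2
          + (r / v * Real.exp (-(w * v)) * (s ^ 2 * r ^ 2)) * Real.cos p.2 ^ 2|
          ≤ (r / v * Real.exp (-(w * v)) * (c ^ 2 * (1 + r ^ 2)))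
          + (r * Real.exp (-(w * v)) * (2 * |c * s| * r))
          + (r / v * Real.exp (-(w * v)) * (s ^ 2 * r ^ 2)) := by
        refine (abs_add_three _ _ _).trans ?_
        have e1 : |r / v * Real.exp (-(w * v)) * (c ^ 2 * (1 + r ^ 2))|
            = r / v * Real.exp (-(w * v)) * (c ^ 2 * (1 + r ^ 2)) := by
          apply abs_of_nonneg; positivity
        have e2 : |(r * Real.exp (-(w * v)) * (2 * c * s * r)) * Real.cos p.2|
            ≤ r * Real.exp (-(w * v)) * (2 * |c * s| * r) := by
          rw [abs_mul]
          have : |r * Real.exp (-(w * v)) * (2 * c * s * r)|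
              = r * Real.exp (-(w * v)) * (2 * |c * s| * r) := by
            rw [abs_mul, abs_mul, abs_of_pos hr, abs_of_pos hexp0,
              show (2:ℝ) * c * s * r = (c * s) * (2 * r) by ring, abs_mul,
              abs_of_nonneg (by positivity : (0:ℝ) ≤ 2 * r)]
            ring
          rw [this]
          nlinarith [mul_nonneg (mul_nonneg hr.le hexp0.le)
            (by positivity : (0:ℝ) ≤ 2 * |c * s| * r)]
        have e3 : |(r / v * Real.exp (-(w * v)) * (s ^ 2 * r ^ 2)) * Real.cos p.2 ^ 2|
            ≤ r / v * Real.exp (-(w * v)) * (s ^ 2 * r ^ 2) := by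
          rw [abs_mul, abs_of_nonneg (by positivity : (0:ℝ) ≤ r / v * Real.exp (-(w * v)) * (s ^ 2 * r ^ 2))]
          have hgc : |Real.cos p.2 ^ 2| ≤ 1 := by
            rw [abs_of_nonneg (sq_nonneg _)]; exact hcossq
          have hX : (0:ℝ) ≤ r / v * Real.exp (-(w * v)) * (s ^ 2 * r ^ 2) := by positivity
          calc r / v * Real.exp (-(w * v)) * (s ^ 2 * r ^ 2) * |Real.cos p.2 ^ 2|
              ≤ r / v * Real.exp (-(w * v)) * (s ^ 2 * r ^ 2) * 1 :=
                mul_le_mul_of_nonneg_left hgc hX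
            _ = r / v * Real.exp (-(w * v)) * (s ^ 2 * r ^ 2) := by ring
        rw [e1]
        linarith
      refine habs.trans ?_
      have hb1 : r / v * Real.exp (-(w * v)) * (c ^ 2 * (1 + r ^ 2))
          ≤ Real.exp (-w * r) * (c ^ 2 * (1 + r ^ 2)) := by
        have h1 : r / v * Real.exp (-(w * v)) ≤ 1 * Real.exp (-w * r) :=
          mul_le_mul hdiv hexp hexp0.le zero_le_one
        have := mul_le_mul_of_nonneg_right h1
          (by positivity : (0:ℝ) ≤ c ^ 2 * (1 + r ^ 2))
        calc r / v * Real.exp (-(w * v)) * (c ^ 2 * (1 + r ^ 2))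
            ≤ 1 * Real.exp (-w * r) * (c ^ 2 * (1 + r ^ 2)) := this
          _ = Real.exp (-w * r) * (c ^ 2 * (1 + r ^ 2)) := by ring
      have hb2 : r * Real.exp (-(w * v)) * (2 * |c * s| * r)
          ≤ Real.exp (-w * r) * (2 * |c * s| * r ^ 2) := by
        have h1 : r * Real.exp (-(w * v)) ≤ r * Real.exp (-w * r) :=
          mul_le_mul_of_nonneg_left hexp hr.le
        have := mul_le_mul_of_nonneg_right h1
          (by positivity : (0:ℝ) ≤ 2 * |c * s| * r)
        calc r * Real.exp (-(w * v)) * (2 * |c * s| * r)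
            ≤ r * Real.exp (-w * r) * (2 * |c * s| * r) := this
          _ = Real.exp (-w * r) * (2 * |c * s| * r ^ 2) := by ring
      have hb3 : r / v * Real.exp (-(w * v)) * (s ^ 2 * r ^ 2)
          ≤ Real.exp (-w * r) * (s ^ 2 * r ^ 2) := by
        have h1 : r / v * Real.exp (-(w * v)) ≤ 1 * Real.exp (-w * r) :=
          mul_le_mul hdiv hexp hexp0.le zero_le_one
        have := mul_le_mul_of_nonneg_right h1
          (by positivity : (0:ℝ) ≤ s ^ 2 * r ^ 2)
        calc r / v * Real.exp (-(w * v)) * (s ^ 2 * r ^ 2)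
            ≤ 1 * Real.exp (-w * r) * (s ^ 2 * r ^ 2) := this
          _ = Real.exp (-w * r) * (s ^ 2 * r ^ 2) := by ring
      calc _ ≤ Real.exp (-w * r) * (c ^ 2 * (1 + r ^ 2)) +
            Real.exp (-w * r) * (2 * |c * s| * r ^ 2) +
            Real.exp (-w * r) * (s ^ 2 * r ^ 2) := by linarith
        _ ≤ (c^2 + 2*|c*s| + s^2) * ((r ^ 0 * Real.exp (-w * r)) + r ^ 2 * Real.exp (-w * r)) * 1 := by
            have he : (0:ℝ) < Real.exp (-w * r) := Real.exp_pos _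
            nlinarith [abs_nonneg (c * s), sq_nonneg c, sq_nonneg s, sq_nonneg r, he.le,
              mul_nonneg (abs_nonneg (c*s)) (sq_nonneg r),
              mul_nonneg he.le (sq_nonneg r)]
  rw [Measure.volume_eq_prod] at hint ⊢
  rw [MeasureTheory.setIntegral_prod _ hint]
  have hcc : Continuous Real.cos := Real.continuous_cos
  have hinner : ∀ r ∈ Ioi (0:ℝ), (∫ θ in Ioo (-π) π,
      ((r / Real.sqrt (1 + r ^ 2) * Real.exp (-(w * Real.sqrt (1 + r ^ 2)))
          * (c ^ 2 * (1 + r ^ 2)))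
        + (r * Real.exp (-(w * Real.sqrt (1 + r ^ 2))) * (2 * c * s * r)) * Real.cos θ
        + (r / Real.sqrt (1 + r ^ 2) * Real.exp (-(w * Real.sqrt (1 + r ^ 2)))
          * (s ^ 2 * r ^ 2)) * Real.cos θ ^ 2))
      = (2 * π) * (r / Real.sqrt (1 + r ^ 2) * Real.exp (-(w * Real.sqrt (1 + r ^ 2))) *
          (c ^ 2 * (1 + r ^ 2) + s ^ 2 * r ^ 2 / 2)) := by
    intro r _
    set A := r / Real.sqrt (1 + r ^ 2) * Real.exp (-(w * Real.sqrt (1 + r ^ 2)))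
      * (c ^ 2 * (1 + r ^ 2)) with hA
    set B := r * Real.exp (-(w * Real.sqrt (1 + r ^ 2))) * (2 * c * s * r) with hB
    set D := r / Real.sqrt (1 + r ^ 2) * Real.exp (-(w * Real.sqrt (1 + r ^ 2)))
      * (s ^ 2 * r ^ 2) with hD
    have hIoo : (∫ θ in Ioo (-π) π, (A + B * Real.cos θ + D * Real.cos θ ^ 2))
        = ∫ θ in (-π)..π, (A + B * Real.cos θ + D * Real.cos θ ^ 2) := by
      rw [intervalIntegral.integral_of_le (by linarith), integral_Ioc_eq_integral_Ioo]
    rw [hIoo]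
    have i1 : IntervalIntegrable (fun _ : ℝ => A) volume (-π) π :=
      intervalIntegrable_const
    have i2 : IntervalIntegrable (fun θ : ℝ => B * Real.cos θ) volume (-π) π :=
      (continuous_const.mul hcc).intervalIntegrable _ _
    have i3 : IntervalIntegrable (fun θ : ℝ => D * Real.cos θ ^ 2) volume (-π) π :=
      (continuous_const.mul (hcc.pow 2)).intervalIntegrable _ _
    rw [intervalIntegral.integral_add (i1.add i2) i3, intervalIntegral.integral_add i1 i2]
    rw [intervalIntegral.integral_const, intervalIntegral.integral_const_mul,
      intervalIntegral.integral_const_mul, integral_cos, integral_cos_sq]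
    simp only [Real.sin_pi, Real.sin_neg, Real.cos_pi, Real.cos_neg, smul_eq_mul]
    rw [hA, hB, hD]
    ring
  rw [MeasureTheory.setIntegral_congr_fun measurableSet_Ioi hinner]
  rw [MeasureTheory.integral_const_mul]

end K2Aux

/-- The exact formula (2.15) for `K̃₂(l,j)`, with `w = √(l²−j²)`:
`K̃₂(l,j) = w⁻⁵ e^{−w} ((w² + 3w + 3)l² − w² − w³)`. -/
theorem K2_tilde_formula (l j w : ℝ) (hj : 0 ≤ j) (hjl : j < l)
    (hw : w = Real.sqrt (l ^ 2 - j ^ 2)) :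
    ∫ y in Set.Ioi (0:ℝ),
        y * Real.sqrt (y ^ 2 + 1) * Real.exp (-l * Real.sqrt (y ^ 2 + 1)) * I0 (j * y)
      = (w ^ 5)⁻¹ * Real.exp (-w) * ((w ^ 2 + 3 * w + 3) * l ^ 2 - w ^ 2 - w ^ 3) := by
  have hl : 0 < l := lt_of_le_of_lt hj hjl
  have hw0 : 0 < w := by
    rw [hw]; exact Real.sqrt_pos.mpr (by nlinarith)
  have hw2 : w ^ 2 = l ^ 2 - j ^ 2 := by
    rw [hw]; exact Real.sq_sqrt (by nlinarith)
  set c := l / w with hcdef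
  set s := j / w with hsdef
  have hwne : w ≠ 0 := hw0.ne'
  have hlc : l = w * c := by rw [hcdef]; field_simp
  have hjs : j = w * s := by rw [hsdef]; field_simp
  have hcpos : 0 < c := div_pos hl hw0
  have hs : 0 ≤ s := div_nonneg hj hw0.le
  have hc : c ^ 2 = s ^ 2 + 1 := by
    rw [hcdef, hsdef]
    field_simp
    linarith [hw2]
  have hA := K2Aux.stepA hj hjl
  have hB := K2Aux.stepB hw0 hs hcpos hc
  rw [← hlc, ← hjs] at hB
  have hC := K2Aux.stepC (c := c) (s := s) hw0
  have hD := K2Aux.stepD (c := c) (s := s) hw0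
  have h2π : (2 * π) ≠ 0 := by positivity
  have hswap : (∫ y in Set.Ioi (0:ℝ),
        y * Real.sqrt (y ^ 2 + 1) * Real.exp (-l * Real.sqrt (y ^ 2 + 1)) * I0 (j * y))
      = ∫ y in Set.Ioi (0:ℝ),
        y * Real.sqrt (1 + y ^ 2) * Real.exp (-(l * Real.sqrt (1 + y ^ 2))) * I0 (j * y) := by
    apply MeasureTheory.setIntegral_congr_fun measurableSet_Ioi
    intro y _
    show y * Real.sqrt (y ^ 2 + 1) * Real.exp (-l * Real.sqrt (y ^ 2 + 1)) * I0 (j * y)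
        = y * Real.sqrt (1 + y ^ 2) * Real.exp (-(l * Real.sqrt (1 + y ^ 2))) * I0 (j * y)
    rw [add_comm (y ^ 2) 1, neg_mul]
  rw [hswap]
  have hchain : (2 * π) * (∫ y in Set.Ioi (0:ℝ),
        y * Real.sqrt (1 + y ^ 2) * Real.exp (-(l * Real.sqrt (1 + y ^ 2))) * I0 (j * y))
      = (2 * π) * (Real.exp (-w) *
          ((c^2 + s^2/2)/w + 2*(c^2 + s^2/2)/w^2 + (2*(c^2 + s^2/2)/w^3 - s^2/(2*w)))) := by
    rw [← hA, hB, hC, hD]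
  have hmain := mul_left_cancel₀ h2π hchain
  rw [hmain]
  have hc2 : c ^ 2 = l ^ 2 / w ^ 2 := by rw [hcdef, div_pow]
  have hs2 : s ^ 2 = (l ^ 2 - w ^ 2) / w ^ 2 := by
    rw [hsdef, div_pow]
    congr 1
    linarith [hw2]
  rw [hc2, hs2]
  field_simp
  ring

end
end

section
/- Let g, G be real numbers with 0 < g ≤ G, let a ∈ (−4, 2], and set s = g² + 4 and S = G² + 4. Then 0 ≤ 1 − (s·g^{4+a})/(S·G^{4+a}) ≤ 4(G² − g²)/G². -/
noncomputable section
open Real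

/-- The key ratio estimate: for `0 < g ≤ G`, `a ∈ (−4,2]`, with `s = g²+4`, `S = G²+4`,
`0 ≤ 1 − (s g^{4+a})/(S G^{4+a}) ≤ 4(G² − g²)/G²`. -/
theorem ratio_difference_estimate (g G a : ℝ) (hg : 0 < g) (hgG : g ≤ G)
    (ha : a ∈ Set.Ioc (-4:ℝ) 2) :
    0 ≤ 1 - ((g ^ 2 + 4) * g ^ (4 + a)) / ((G ^ 2 + 4) * G ^ (4 + a)) ∧
    1 - ((g ^ 2 + 4) * g ^ (4 + a)) / ((G ^ 2 + 4) * G ^ (4 + a))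
      ≤ 4 * (G ^ 2 - g ^ 2) / G ^ 2 := by
  obtain ⟨ha1, ha2⟩ := ha
  have hG : 0 < G := lt_of_lt_of_le hg hgG
  have hs : (0:ℝ) < g ^ 2 + 4 := by positivity
  have hS : (0:ℝ) < G ^ 2 + 4 := by positivity
  have hsS : g ^ 2 + 4 ≤ G ^ 2 + 4 := by nlinarith
  have hgr : 0 < g ^ (4 + a) := rpow_pos_of_pos hg _
  have hGr : 0 < G ^ (4 + a) := rpow_pos_of_pos hG _
  have hexp0 : (0:ℝ) ≤ 4 + a := by linarith
  have ht0 : 0 < g / G := div_pos hg hG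
  have ht1 : g / G ≤ 1 := (div_le_one hG).mpr hgG
  have hrw : g ^ (4 + a) / G ^ (4 + a) = (g / G) ^ (4 + a) :=
    (Real.div_rpow hg.le hG.le _).symm
  constructor
  · have hle : ((g ^ 2 + 4) * g ^ (4 + a)) / ((G ^ 2 + 4) * G ^ (4 + a)) ≤ 1 := by
      rw [div_le_one (by positivity)]
      have h1 : g ^ (4 + a) ≤ G ^ (4 + a) := by
        have := Real.rpow_le_one ht0.le ht1 hexp0
        rw [← hrw, div_le_one hGr] at this
        exact this
      nlinarith
    linarith
  · -- lower bound on the ratio using exponent 6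
    have hd : (g / G) ^ ((6:ℝ)) ≤ (g / G) ^ (4 + a) :=
      Real.rpow_le_rpow_of_exponent_ge ht0 ht1 (by linarith)
    have h6 : (g / G) ^ ((6:ℝ)) = g ^ 6 / G ^ 6 := by
      rw [show ((6:ℝ)) = ((6:ℕ):ℝ) by norm_num, Real.rpow_natCast, div_pow]
    have hkey : ((g ^ 2 + 4) * g ^ 6) / ((G ^ 2 + 4) * G ^ 6) ≤
        ((g ^ 2 + 4) * g ^ (4 + a)) / ((G ^ 2 + 4) * G ^ (4 + a)) := by
      have e1 : ((g ^ 2 + 4) * g ^ 6) / ((G ^ 2 + 4) * G ^ 6)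
          = ((g ^ 2 + 4) / (G ^ 2 + 4)) * (g ^ 6 / G ^ 6) := (div_mul_div_comm _ _ _ _).symm
      have e2 : ((g ^ 2 + 4) * g ^ (4 + a)) / ((G ^ 2 + 4) * G ^ (4 + a))
          = ((g ^ 2 + 4) / (G ^ 2 + 4)) * (g ^ (4 + a) / G ^ (4 + a)) :=
        (div_mul_div_comm _ _ _ _).symm
      rw [e1, e2, hrw, ← h6]
      exact mul_le_mul_of_nonneg_left hd (by positivity)
    have hpoly : 1 - ((g ^ 2 + 4) * g ^ 6) / ((G ^ 2 + 4) * G ^ 6)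
        ≤ 4 * (G ^ 2 - g ^ 2) / G ^ 2 := by
      rw [show 1 - (g ^ 2 + 4) * g ^ 6 / ((G ^ 2 + 4) * G ^ 6)
            = ((G ^ 2 + 4) * G ^ 6 - (g ^ 2 + 4) * g ^ 6) / ((G ^ 2 + 4) * G ^ 6) by
          field_simp,
        div_le_div_iff₀ (by positivity) (by positivity : (0:ℝ) < G ^ 2)]
      have hfac1 : 0 ≤ (G ^ 2 - g ^ 2) * (3 * G ^ 6 - g ^ 2 * G ^ 4 - g ^ 4 * G ^ 2 - g ^ 6) := by
        apply mul_nonneg (by nlinarith)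
        nlinarith [pow_le_pow_left₀ hg.le hgG 6, pow_le_pow_left₀ hg.le hgG 4,
          pow_le_pow_left₀ hg.le hgG 2, mul_le_mul_of_nonneg_left
            (pow_le_pow_left₀ hg.le hgG 4) (sq_nonneg g)]
      have hfac2 : 0 ≤ (G ^ 2 - g ^ 2) * (3 * G ^ 4 - g ^ 2 * G ^ 2 - g ^ 4) := by
        apply mul_nonneg (by nlinarith)
        nlinarith [pow_le_pow_left₀ hg.le hgG 4, pow_le_pow_left₀ hg.le hgG 2]
      have hG2 : (0:ℝ) < G ^ 2 := by positivity
      have hG4 : (0:ℝ) ≤ G ^ 4 := by positivity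
      nlinarith [mul_nonneg hfac2 hG4, mul_nonneg hfac1 hG2.le]
    linarith
  
end
end
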